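/- Let p_m < p_s and 0 ≤ k′ < k < p_m + k′ be real numbers. Then the function μ₁*(h) := (1−h)(p_m+k′−k)/(h k + (1−h)h(p_s−p_m) + (1−h)(p_m+k′−k)) is strictly decreasing in h on [0,1], with μ₁*(0) = 1 and μ₁*(1) = 0. (Used in the proof of Proposition 2: as the ethical level h of the market increases, the lower boundary of the FOFU region sweeps from 1 down to 0.) -/

import Mathlib

/-- Used in the proof of Proposition 2: the lower FOFU boundary
`μ₁*(h) = (1−h)(p_m+k′−k)/(hk + (1−h)h(p_s−p_m) + (1−h)(p_m+k′−k))`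
is strictly decreasing in `h` on `[0,1]`, with `μ₁*(0) = 1` and `μ₁*(1) = 0`. -/
theorem mu1_strictAnti_in_h
    (pm ps k k' : ℝ) (hpm : 0 < pm) (hps : pm < ps)
    (hk' : 0 ≤ k') (hkk : k' < k) (hkp : k < pm + k') :
    StrictAntiOn
      (fun h : ℝ => (1 - h) * (pm + k' - k) /
        (h * k + (1 - h) * h * (ps - pm) + (1 - h) * (pm + k' - k)))
      (Set.Icc (0 : ℝ) 1) ∧
    (1 - (0:ℝ)) * (pm + k' - k) /
        ((0:ℝ) * k + (1 - (0:ℝ)) * (0:ℝ) * (ps - pm) +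
          (1 - (0:ℝ)) * (pm + k' - k)) = 1 ∧
    (1 - (1:ℝ)) * (pm + k' - k) /
        ((1:ℝ) * k + (1 - (1:ℝ)) * (1:ℝ) * (ps - pm) +
          (1 - (1:ℝ)) * (pm + k' - k)) = 0 := by
  have hc : 0 < pm + k' - k := by linarith
  have hs : 0 < ps - pm := by linarith
  have hk0 : 0 < k := lt_of_le_of_lt hk' hkk
  have hD : ∀ h : ℝ, h ∈ Set.Icc (0:ℝ) 1 →
      0 < h * k + (1 - h) * h * (ps - pm) + (1 - h) * (pm + k' - k) := by
    rintro h ⟨h0, h1⟩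
    rcases eq_or_lt_of_le h0 with rfl | hpos
    · simpa using hc
    · have : 0 < h * k := mul_pos hpos hk0
      nlinarith [mul_nonneg (mul_nonneg (by linarith : (0:ℝ) ≤ 1 - h) h0) hs.le,
        mul_nonneg (by linarith : (0:ℝ) ≤ 1 - h) hc.le]
  refine ⟨?_, by norm_num; exact hc.ne', by norm_num⟩
  intro a ha b hb hab
  have hDa := hD a ha
  have hDb := hD b hb
  rw [div_lt_div_iff₀ hDb hDa]
  obtain ⟨ha0, ha1⟩ := ha
  obtain ⟨hb0, hb1⟩ := hb
  have h1 : 0 < (pm + k' - k) * (b - a) * k :=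
    mul_pos (mul_pos hc (by linarith)) hk0
  have h2 : 0 ≤ (pm + k' - k) * (b - a) * ((1 - a) * (1 - b)) * (ps - pm) := by
    apply mul_nonneg
    apply mul_nonneg (mul_nonneg hc.le (by linarith))
    exact mul_nonneg (by linarith) (by linarith)
    exact hs.le
  nlinarith [h1, h2]
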